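/- arXiv:2405.12392 — 5 statements merged into one kernel-verified Lean document; each statement's English description precedes it below -/
import Mathlib

section
/- Let X, Y, Z be integral schemes of finite type over a Noetherian scheme, with Z separated. Let f : X → Y be a proper surjective morphism such that the natural map 𝒪_Y → f_*𝒪_X is an isomorphism, and let g : X → Z be a morphism such that for every point y ∈ Y the image g(f⁻¹(y)) consists of a single point of Z. Then g factors through f: there exists a (unique) morphism h : Y → Z with g = h ∘ f. -/
open AlgebraicGeometry CategoryTheory

/-- **Rigidity Lemma, global form.** Let `X, Y, Z` be integral schemes of finite type over a
Noetherian scheme `S`, with `Z` separated (over `S`). Let `f : X ⟶ Y` be a proper surjective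
morphism such that the natural map `𝒪_Y → f_* 𝒪_X` is an isomorphism (i.e. `f.app U` is an
isomorphism for every open `U ⊆ Y`), and let `g : X ⟶ Z` be a morphism such that for every
`y ∈ Y` the image `g(f⁻¹(y))` is a single point. Then `g` factors uniquely through `f`. -/
theorem rigidity_lemma_global
    (S X Y Z : Scheme) [AlgebraicGeometry.IsNoetherian S]
    [IsIntegral X] [IsIntegral Y] [IsIntegral Z]
    (sX : X ⟶ S) (sY : Y ⟶ S) (sZ : Z ⟶ S)
    [LocallyOfFiniteType sX] [QuasiCompact sX]
    [LocallyOfFiniteType sY] [QuasiCompact sY]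
    [LocallyOfFiniteType sZ] [QuasiCompact sZ]
    [IsSeparated sZ]
    (f : X ⟶ Y) [IsProper f] [Surjective f] (hfS : f ≫ sY = sX)
    (hO : ∀ U : Y.Opens, IsIso (f.app U))
    (g : X ⟶ Z) (hgS : g ≫ sZ = sX)
    (hfib : ∀ y : Y, ∃ z : Z, g.base '' (f.base ⁻¹' {y}) = {z}) :
    ∃! h : Y ⟶ Z, g = f ≫ h := by
  classical
  -- the underlying function of the factorization
  set φ : Y → Z := fun y => (hfib y).choose with hφ
  have hcomm : ∀ x : X, g.base x = φ (f.base x) := by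
    intro x
    have hx : g.base x ∈ g.base '' (f.base ⁻¹' {f.base x}) := ⟨x, rfl, rfl⟩
    rw [(hfib (f.base x)).choose_spec] at hx
    exact hx
  have hcontφ : Continuous φ := by
    have hq : Topology.IsQuotientMap f.base :=
      f.isClosedMap.isQuotientMap f.base.hom.continuous f.surjective
    rw [hq.continuous_iff]
    have : φ ∘ f.base = g.base := funext fun x => (hcomm x).symm
    rw [this]
    exact g.base.hom.continuous
  let hbase : (Y.toPresheafedSpace : TopCat) ⟶ (Z.toPresheafedSpace : TopCat) :=
    TopCat.ofHom ⟨φ, hcontφ⟩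
  have hbase_comp : f.base ≫ hbase = g.base := by
    apply TopCat.hom_ext
    apply ContinuousMap.ext
    intro x
    exact (hcomm x).symm
  -- f.c is an isomorphism of sheaves
  haveI : ∀ U : (TopologicalSpace.Opens Y)ᵒᵖ, IsIso (f.c.app U) := fun U => hO U.unop
  haveI : IsIso f.c := NatIso.isIso_of_isIso_app f.c
  -- the presheaf part of the factorization
  let c : Z.presheaf ⟶ hbase _* Y.presheaf :=
    g.c ≫ (TopCat.Presheaf.pushforwardEq hbase_comp.symm X.presheaf).hom ≫
      (TopCat.Presheaf.Pushforward.comp f.base hbase X.presheaf).hom ≫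
      (TopCat.Presheaf.pushforward CommRingCat hbase).map (inv f.c)
  let hPS : Y.toPresheafedSpace ⟶ Z.toPresheafedSpace := ⟨hbase, c⟩
  have compPS : (f.toPshHom ≫ hPS : X.toPresheafedSpace ⟶ Z.toPresheafedSpace)
      = g.toPshHom := by
    refine PresheafedSpace.ext _ _ hbase_comp ?_
    show (c ≫ (TopCat.Presheaf.pushforward CommRingCat hbase).map f.toPshHom.c) ≫ _ = _
    simp only [c, Category.assoc, ← Functor.map_comp, IsIso.inv_hom_id, Functor.map_id]
    rw [CategoryTheory.Functor.map_id]
    erw [Category.id_comp]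
    refine NatTrans.ext (funext fun U => ?_)
    erw [NatTrans.comp_app, NatTrans.comp_app]
    simp only [TopCat.Presheaf.pushforwardEq_hom_app, Functor.whiskerRight_app, eqToHom_app,
      eqToHom_map, eqToHom_trans]
    erw [NatTrans.comp_app, NatTrans.id_app, Category.comp_id, TopCat.Presheaf.pushforwardEq_hom_app,
      Category.assoc, eqToHom_map, eqToHom_trans, eqToHom_refl, Category.comp_id]
  -- the stalk maps are local ring homomorphisms
  have hloc : ∀ y : Y, IsLocalHom (hPS.stalkMap y).hom := by
    intro y
    obtain ⟨x, rfl⟩ := f.surjective y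
    have h1 : (f.toPshHom ≫ hPS).stalkMap x = hPS.stalkMap (f.base x) ≫ f.toPshHom.stalkMap x :=
      PresheafedSpace.stalkMap.comp f.toPshHom hPS x
    have h2 := PresheafedSpace.stalkMap.congr_hom _ _ compPS x
    rw [h1] at h2
    haveI : IsLocalHom (g.toPshHom.stalkMap x).hom := g.toLRSHom.prop x
    haveI : IsLocalHom (hPS.stalkMap (f.base x) ≫ f.toPshHom.stalkMap x).hom := by
      show IsLocalHom (hPS.stalkMap (f.base x) ≫ f.toPshHom.stalkMap x).hom
      rw [h2]
      haveI : IsLocalHom (eqToHom (show Z.presheaf.stalk ((f.toPshHom ≫ hPS).base x) =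
          Z.presheaf.stalk (g.toPshHom.base x) by rw [compPS])).hom :=
        isLocalHom_of_iso (eqToIso (by rw [compPS]))
      exact @CommRingCat.isLocalHom_comp _ _ _ _ _ inferInstance (isLocalHom_of_iso (eqToIso (by rw [← compPS]; rfl)))
    haveI : IsLocalHom (f.toPshHom.stalkMap x).hom := f.toLRSHom.prop x
    exact isLocalHom_of_comp (hPS.stalkMap (f.base x)).hom (f.toPshHom.stalkMap x).hom
  -- assemble into a scheme morphism
  let h : Y ⟶ Z := ⟨⟨hPS, hloc⟩⟩
  have hEq : g = f ≫ h := by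
    apply Scheme.Hom.ext'
    apply LocallyRingedSpace.Hom.ext'
    exact compPS.symm
  refine ⟨h, hEq, ?_⟩
  intro h' hh'
  -- uniqueness
  have hfh : f ≫ h' = f ≫ h := by rw [← hh', hEq]
  have hb : h'.base = h.base := by
    apply TopCat.hom_ext
    apply ContinuousMap.ext
    intro y
    obtain ⟨x, rfl⟩ := f.surjective y
    have := congrArg (fun k : X ⟶ Z => k.base x) hfh
    simpa [Scheme.Hom.comp_apply] using this
  apply Scheme.Hom.ext hb
  intro U
  haveI : IsIso (f.app (h ⁻¹ᵁ U)) := hO _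
  rw [← cancel_mono (f.app (h ⁻¹ᵁ U))]
  have hc := Scheme.Hom.congr_app hfh U
  rw [Scheme.Hom.comp_app, Scheme.Hom.comp_app] at hc
  erw [Category.assoc, f.naturality, ← Category.assoc, hc, Category.assoc, Category.assoc,
    ← Functor.map_comp]
  simp only [Quiver.Hom.unop_op, eqToHom_map, eqToHom_op, eqToHom_unop, eqToHom_trans,
    eqToHom_refl, CategoryTheory.Functor.map_id, Category.comp_id]
  erw [eqToHom_trans, eqToHom_refl, CategoryTheory.Functor.map_id, Category.comp_id]
end

section
/- Let p : W → Y be a proper morphism of integral Noetherian schemes such that the natural map 𝒪_Y → p_*𝒪_W is an isomorphism. If for some point y ∈ Y the fiber p⁻¹(y) consists of a single point, then there exists an open neighborhood U of y in Y such that p restricts to an isomorphism p⁻¹(U) → U. -/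
open AlgebraicGeometry CategoryTheory

lemma aux_isIso_morphismRestrict {X Y : Scheme} (f : X ⟶ Y) (U : Y.Opens)
    (hU : IsAffineOpen U) (hV : IsAffineOpen (f ⁻¹ᵁ U)) (h : IsIso (f.app U)) :
    IsIso (f ∣_ U) := by
  haveI : IsAffine U.toScheme := hU
  haveI : IsAffine (f ⁻¹ᵁ U).toScheme := hV
  haveI : IsIso ((f ∣_ U).appTop) := by
    rw [morphismRestrict_appTop]
    haveI : IsIso (f.app (U.ι ''ᵁ ⊤)) := by
      have e : U.ι ''ᵁ ⊤ = U := U.isOpenEmbedding_obj_top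
      rw [e]; exact h
    exact IsIso.comp_isIso' this
      (Iso.isIso_hom (X.presheaf.mapIso (eqToIso (image_morphismRestrict_preimage f U ⊤)).op))
  have hn := Scheme.toSpecΓ_naturality (f ∣_ U)
  haveI : IsIso ((f ∣_ U) ≫ U.toScheme.toSpecΓ) := by
    rw [hn]; infer_instance
  exact IsIso.of_isIso_comp_right (f ∣_ U) U.toScheme.toSpecΓ

/-- Let `p : W ⟶ Y` be a proper morphism of integral Noetherian schemes such that the natural
map `𝒪_Y → p_* 𝒪_W` is an isomorphism (i.e. `p.app U` is an isomorphism for every open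
`U ⊆ Y`). If for some point `y ∈ Y` the fiber `p⁻¹(y)` is a single point, then there is an
open neighbourhood `U` of `y` over which `p` restricts to an isomorphism `p⁻¹(U) → U`. -/
theorem proper_O_iso_singleton_fiber_local_iso
    (W Y : Scheme)
    [AlgebraicGeometry.IsNoetherian W] [AlgebraicGeometry.IsNoetherian Y]
    [IsIntegral W] [IsIntegral Y]
    (p : W ⟶ Y) [IsProper p]
    (hO : ∀ U : Y.Opens, IsIso (p.app U))
    (y : Y) (hy : ∃ w : W, p.base ⁻¹' {y} = {w}) :
    ∃ U : Y.Opens, y ∈ U ∧ IsIso (p ∣_ U) := by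
  obtain ⟨w, hw⟩ := hy
  have hpw : p.base w = y := by
    have : w ∈ p.base ⁻¹' {y} := by rw [hw]; rfl
    simpa using this
  -- an affine open neighbourhood `V` of `w`
  obtain ⟨V, hVaff, hwV, -⟩ :=
    (TopologicalSpace.Opens.isBasis_iff_nbhd.mp W.isBasis_affineOpens) (show w ∈ (⊤ : W.Opens) from trivial)
  -- shrink the base: the image of the complement of V is closed and misses y
  have hclosed : IsClosedMap p.base := p.isClosedMap
  have hZc : IsClosed (p.base '' (↑V)ᶜ) := hclosed _ (V.isOpen.isClosed_compl)
  have hyZ : y ∉ p.base '' (↑V)ᶜ := by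
    rintro ⟨x, hxV, hxy⟩
    have : x ∈ p.base ⁻¹' {y} := by simpa using hxy
    rw [hw] at this
    exact hxV (this ▸ hwV)
  -- affine open U₀ ∋ y inside the complement
  obtain ⟨U₀, hU₀aff, hyU₀, hU₀le⟩ :=
    (TopologicalSpace.Opens.isBasis_iff_nbhd.mp Y.isBasis_affineOpens)
      (show y ∈ ⟨(p.base '' (↑V)ᶜ)ᶜ, hZc.isOpen_compl⟩ from hyZ)
  have hpre : p ⁻¹ᵁ U₀ ≤ V := by
    intro x hx
    by_contra hxV
    exact hU₀le hx ⟨x, hxV, rfl⟩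
  -- a basic open of V around w inside the preimage of U₀
  have hwpre : w ∈ p ⁻¹ᵁ U₀ := show p.base w ∈ U₀ from hpw ▸ hyU₀
  obtain ⟨c, hcle, hwc⟩ := hVaff.exists_basicOpen_le (⟨w, hwpre⟩ : p ⁻¹ᵁ U₀) hwV
  -- restrict c to the preimage of U₀
  set t : Γ(W, p ⁻¹ᵁ U₀) := W.presheaf.map (homOfLE hpre).op c with ht
  have hbt : W.basicOpen t = W.basicOpen c := by
    rw [ht, Scheme.basicOpen_res]
    exact inf_eq_right.mpr hcle
  -- pull t back through the iso p.app U₀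
  haveI := hO U₀
  set s : Γ(Y, U₀) := (inv (p.app U₀)) t with hs
  have happs : (p.app U₀) s = t := by
    rw [hs, ← CategoryTheory.comp_apply, IsIso.inv_hom_id, CategoryTheory.id_apply]
  have hpreU : p ⁻¹ᵁ Y.basicOpen s = W.basicOpen c := by
    rw [Scheme.preimage_basicOpen, happs, hbt]
  refine ⟨Y.basicOpen s, ?_, ?_⟩
  · have hwU : w ∈ p ⁻¹ᵁ Y.basicOpen s := hpreU ▸ hwc
    exact hpw ▸ hwU
  · exact aux_isIso_morphismRestrict p (Y.basicOpen s) (hU₀aff.basicOpen s)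
      (hpreU ▸ hVaff.basicOpen c) (hO _)
end

section
/- Let 𝒪 be the ring of integers of a finite extension of ℚ_p (or of a number field). Let q : W → X be a proper morphism of integral finite-type 𝒪-schemes which is birational, i.e. there exist dense open subschemes V ⊆ W and U ⊆ X such that q restricts to an isomorphism V → U. Let w be a closed point of W and set x = q(w). Suppose the induced map Spec 𝒪_{W,w} → Spec 𝒪_{X,x} admits a formal section: there exists a local homomorphism of 𝒪_{X,x}-algebras 𝒪_{W,w} → \widehat{𝒪_{X,x}}, where \widehat{𝒪_{X,x}} is the completion of the local ring 𝒪_{X,x} at its maximal ideal, whose composition with the natural map 𝒪_{X,x} → 𝒪_{W,w} is the canonical completion map. Then the induced local homomorphism 𝒪_{X,x} → 𝒪_{W,w} is an isomorphism; that is, q is an isomorphism in a neighborhood of w. -/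
open AlgebraicGeometry CategoryTheory NumberField

section Auxiliary

open IsLocalRing TopologicalSpace

/-- Krull-intersection style contraction: if `a = a' * t` holds in the maximal-adic completion
of a Noetherian local ring, then `a ∈ (a')`. -/
lemma AuxFormalSection.mem_span_of_adicCompletion {R : Type*} [CommRing R] [IsNoetherianRing R]
    [IsLocalRing R]
    (a a' : R) (t : AdicCompletion (maximalIdeal R) R)
    (h : algebraMap R (AdicCompletion (maximalIdeal R) R) a
      = algebraMap R (AdicCompletion (maximalIdeal R) R) a' * t) :
    a ∈ Ideal.span {a'} := by
  have key : ∀ n : ℕ, ∃ s : R, a - a' * s ∈ ((maximalIdeal R) ^ n • ⊤ : Submodule R R) := by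
    intro n
    obtain ⟨s, hs⟩ := Submodule.Quotient.mk_surjective _ (t.val n)
    refine ⟨s, ?_⟩
    have h1 : (algebraMap R (AdicCompletion (maximalIdeal R) R) a).val n
        = (algebraMap R (AdicCompletion (maximalIdeal R) R) a' * t).val n := by rw [h]
    rw [AdicCompletion.val_mul] at h1
    have h2 : (algebraMap R (AdicCompletion (maximalIdeal R) R) a).val n
        = Submodule.Quotient.mk a := rfl
    have h3 : (algebraMap R (AdicCompletion (maximalIdeal R) R) a').val n
        = Submodule.Quotient.mk a' := rfl
    rw [h2, h3, ← hs] at h1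
    have h4 : (Submodule.Quotient.mk (a - a' * s)
        : R ⧸ ((maximalIdeal R) ^ n • ⊤ : Ideal R)) = 0 := by
      rw [show (Submodule.Quotient.mk (a - a' * s)
          : R ⧸ ((maximalIdeal R) ^ n • ⊤ : Ideal R))
          = Submodule.Quotient.mk a - Submodule.Quotient.mk a' * Submodule.Quotient.mk s from rfl]
      rw [← h1]; ring
    exact (Submodule.Quotient.mk_eq_zero _).mp h4
  have hmem : ∀ n : ℕ, (Submodule.Quotient.mk a : R ⧸ Ideal.span {a'})
      ∈ ((maximalIdeal R) ^ n • ⊤ : Submodule R (R ⧸ Ideal.span {a'})) := by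
    intro n
    obtain ⟨s, hs⟩ := key n
    have h5 : (Submodule.Quotient.mk a : R ⧸ Ideal.span {a'})
        = Submodule.Quotient.mk (a - a' * s) := by
      rw [Submodule.Quotient.eq]
      have : a - (a - a' * s) = a' * s := by ring
      rw [this]
      exact Ideal.mem_span_singleton.mpr ⟨s, rfl⟩
    rw [h5]
    have h6 : (Submodule.Quotient.mk (a - a' * s) : R ⧸ Ideal.span {a'})
        ∈ Submodule.map (Ideal.span {a'}).mkQ ((maximalIdeal R) ^ n • ⊤) :=
      ⟨a - a' * s, hs, rfl⟩
    have h7 : Submodule.map (Ideal.span {a'}).mkQ ((maximalIdeal R) ^ n • ⊤ : Submodule R R)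
        ≤ ((maximalIdeal R) ^ n • ⊤ : Submodule R (R ⧸ Ideal.span {a'})) := by
      rw [Submodule.map_smul'']
      exact smul_mono_right _ le_top
    exact h7 h6
  have hbot := Ideal.iInf_pow_smul_eq_bot_of_isLocalRing (R := R)
    (M := R ⧸ Ideal.span {a'}) (I := maximalIdeal R)
    (Ideal.IsMaximal.ne_top (maximalIdeal.isMaximal R))
  have hfi : (Submodule.Quotient.mk a : R ⧸ Ideal.span {a'})
      ∈ (⨅ n : ℕ, ((maximalIdeal R) ^ n • ⊤ : Submodule R (R ⧸ Ideal.span {a'}))) :=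
    Submodule.mem_iInf _ |>.mpr hmem
  rw [hbot] at hfi
  exact (Submodule.Quotient.mk_eq_zero _).mp hfi

/-- The stalk of an integral scheme is a domain. -/
lemma AuxFormalSection.stalk_isDomain (X : Scheme) [IsIntegral X] (x : X) :
    IsDomain (X.presheaf.stalk x) := by
  have hU : IsAffineOpen (X.affineCover.f (X.affineCover.idx x)).opensRange := isAffineOpen_opensRange _
  have hx : x ∈ (X.affineCover.f (X.affineCover.idx x)).opensRange := X.affineCover.covers x
  haveI : Nonempty (X.affineCover.f (X.affineCover.idx x)).opensRange := ⟨⟨x, hx⟩⟩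
  letI := TopCat.Presheaf.algebra_section_stalk X.presheaf
    (⟨x, hx⟩ : (X.affineCover.f (X.affineCover.idx x)).opensRange)
  haveI := hU.isLocalization_stalk ⟨x, hx⟩
  exact IsLocalization.isDomain_of_le_nonZeroDivisors _
    (hU.primeIdealOf ⟨x, hx⟩).asIdeal.primeCompl_le_nonZeroDivisors

/-- Stalks of a scheme locally of finite type over a Noetherian affine base are Noetherian. -/
lemma AuxFormalSection.stalk_isNoetherian {R : CommRingCat} [IsNoetherianRing R] (X : Scheme)
    (sX : X ⟶ Spec R) [LocallyOfFiniteType sX] (x : X) :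
    IsNoetherianRing (X.presheaf.stalk x) := by
  have hU : IsAffineOpen (X.affineCover.f (X.affineCover.idx x)).opensRange := isAffineOpen_opensRange _
  have hx : x ∈ (X.affineCover.f (X.affineCover.idx x)).opensRange := X.affineCover.covers x
  haveI : Nonempty (X.affineCover.f (X.affineCover.idx x)).opensRange := ⟨⟨x, hx⟩⟩
  letI := TopCat.Presheaf.algebra_section_stalk X.presheaf
    (⟨x, hx⟩ : (X.affineCover.f (X.affineCover.idx x)).opensRange)
  haveI := hU.isLocalization_stalk ⟨x, hx⟩
  have e : (X.affineCover.f (X.affineCover.idx x)).opensRange ≤ sX ⁻¹ᵁ ⊤ := le_top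
  have ft := LocallyOfFiniteType.finiteType_of_affine_subset
    sX (isAffineOpen_top (Spec R)) hU e
  haveI : IsNoetherianRing Γ(Spec R, ⊤) :=
    isNoetherianRing_of_ringEquiv R (Scheme.ΓSpecIso R).symm.commRingCatIsoToRingEquiv
  letI := (sX.appLE ⊤ (X.affineCover.f (X.affineCover.idx x)).opensRange e).hom.toAlgebra
  haveI : Algebra.FiniteType Γ(Spec R, ⊤) Γ(X, (X.affineCover.f (X.affineCover.idx x)).opensRange) := ft
  haveI : IsNoetherianRing Γ(X, (X.affineCover.f (X.affineCover.idx x)).opensRange) :=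
    Algebra.FiniteType.isNoetherianRing Γ(Spec R, ⊤) _
  exact IsLocalization.isNoetherianRing (hU.primeIdealOf ⟨x, hx⟩).asIdeal.primeCompl
    (X.presheaf.stalk x) ‹_›

/-- The map to the stalk at a generic point is injective for integral schemes. -/
lemma AuxFormalSection.stalkSpecializes_injective {X : Scheme} [IsIntegral X] {p x : X}
    (hp : IsGenericPoint p Set.univ) (hs : p ⤳ x) :
    Function.Injective (X.presheaf.stalkSpecializes hs) := by
  have hpe : p = genericPoint X := hp.eq (genericPoint_spec X)
  subst hpe
  rw [show ((X.presheaf.stalkSpecializes hs : X.presheaf.stalk x → X.functionField))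
      = algebraMap (X.presheaf.stalk x) X.functionField from rfl]
  exact IsLocalization.injective _ (le_refl (nonZeroDivisors (X.presheaf.stalk x)))

/-- Every element of the stalk at a generic point is a fraction of elements in a given stalk. -/
lemma AuxFormalSection.stalk_exists_frac {X : Scheme} [IsIntegral X] {p x : X}
    (hp : IsGenericPoint p Set.univ) (hs : p ⤳ x) (z : X.presheaf.stalk p) :
    ∃ a a' : X.presheaf.stalk x, a' ≠ 0 ∧
      z * X.presheaf.stalkSpecializes hs a' = X.presheaf.stalkSpecializes hs a := by
  have hpe : p = genericPoint X := hp.eq (genericPoint_spec X)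
  subst hpe
  obtain ⟨⟨a, a'⟩, ha⟩ := IsLocalization.surj (M := nonZeroDivisors (X.presheaf.stalk x))
    (S := X.functionField) z
  refine ⟨a, a'.1, nonZeroDivisors.ne_zero a'.2, ?_⟩
  rw [show ((X.presheaf.stalkSpecializes hs : X.presheaf.stalk x → X.functionField))
      = algebraMap (X.presheaf.stalk x) X.functionField from rfl]
  exact ha

variable {W X : Scheme} [IsIntegral W] [IsIntegral X]

/-- A proper birational morphism takes the generic point to the generic point. -/
lemma AuxFormalSection.generic_image (q : W ⟶ X) (V : W.Opens) (U : X.Opens)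
    (hUd : Dense (U : Set X))
    (e : (V : Scheme) ⟶ (U : Scheme)) (he : IsIso e) (hcomm : e ≫ U.ι = V.ι ≫ q) :
    IsGenericPoint (q.base (genericPoint W)) Set.univ := by
  rw [isGenericPoint_def]
  apply Set.eq_univ_of_univ_subset
  have h1 : Set.range q.base ⊆ closure {q.base (genericPoint W)} := by
    rintro _ ⟨y, rfl⟩
    have hy : (y : W) ∈ closure {genericPoint W} := by
      rw [(genericPoint_spec W).def]; trivial
    have ha : q.base y ∈ q.base '' closure {genericPoint W} := ⟨y, hy, rfl⟩
    have hb := image_closure_subset_closure_image (f := q.base) q.base.hom.continuous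
      (s := {genericPoint W}) ha
    rwa [Set.image_singleton] at hb
  have h2 : (U : Set X) ⊆ Set.range q.base := by
    intro y hy
    haveI := he
    have hv : e.base ((inv e).base ⟨y, hy⟩) = ⟨y, hy⟩ := by
      show (inv e ≫ e).base ⟨y, hy⟩ = _
      rw [IsIso.inv_hom_id]
      rfl
    refine ⟨V.ι.base ((inv e).base ⟨y, hy⟩), ?_⟩
    have h3 : (V.ι ≫ q).base ((inv e).base ⟨y, hy⟩)
        = (e ≫ U.ι).base ((inv e).base ⟨y, hy⟩) := by rw [← hcomm]
    rw [Scheme.Hom.comp_apply] at h3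
    rw [h3, Scheme.Hom.comp_apply, hv]
    rfl
  calc (Set.univ : Set X) = closure (U : Set X) := hUd.closure_eq.symm
    _ ⊆ closure (closure {q.base (genericPoint W)}) := closure_mono (h2.trans h1)
    _ = closure {q.base (genericPoint W)} := closure_closure

/-- A birational morphism induces an isomorphism on stalks at the generic point. -/
lemma AuxFormalSection.generic_stalkMap_iso (q : W ⟶ X) (V : W.Opens) (U : X.Opens)
    (hVne : Nonempty V)
    (e : (V : Scheme) ⟶ (U : Scheme)) (he : IsIso e) (hcomm : e ≫ U.ι = V.ι ≫ q) :
    IsIso (q.stalkMap (genericPoint W)) := by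
  haveI := he
  have hV1 : V.ι.base (genericPoint V) = genericPoint W :=
    genericPoint_eq_of_isOpenImmersion V.ι
  rw [← hV1]
  have hst := Scheme.Hom.stalkMap_congr_hom (V.ι ≫ q) (e ≫ U.ι) hcomm.symm (genericPoint V)
  rw [Scheme.Hom.stalkMap_comp, Scheme.Hom.stalkMap_comp] at hst
  have hiso : IsIso (q.stalkMap (V.ι.base (genericPoint V))
      ≫ V.ι.stalkMap (genericPoint V)) := by
    rw [hst]
    haveI : IsIso (U.ι.stalkMap (e.base (genericPoint V))) := inferInstance
    haveI : IsIso (e.stalkMap (genericPoint V)) := inferInstance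
    exact IsIso.comp_isIso' (Iso.isIso_hom _) (IsIso.comp_isIso' ‹_› ‹_›)
  exact IsIso.of_isIso_comp_right _ (V.ι.stalkMap (genericPoint V))

end Auxiliary

set_option synthInstance.maxHeartbeats 800000 in
/-- Let `𝒪 = 𝓞 K` be the ring of integers of a number field `K` (the statement equally applies
to rings of integers of finite extensions of `ℚ_p`). Let `q : W ⟶ X` be a proper birational
morphism of integral finite-type `𝒪`-schemes, i.e. there are dense opens `V ⊆ W`, `U ⊆ X`
such that `q` restricts to an isomorphism `V → U`. Let `w` be a closed point of `W` with image
`x = q(w)`, and suppose the map of local rings `𝒪_{X,x} → 𝒪_{W,w}` admits a formal section: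
a local ring homomorphism `φ : 𝒪_{W,w} →+* (𝒪_{X,x})^∧` to the maximal-adic completion whose
composite with `𝒪_{X,x} → 𝒪_{W,w}` is the canonical completion map. Then
`𝒪_{X,x} → 𝒪_{W,w}` is an isomorphism, i.e. `q` is an isomorphism near `w`. -/
theorem iso_near_point_of_formal_section
    (K : Type) [Field K] [NumberField K]
    (W X : Scheme) [IsIntegral W] [IsIntegral X]
    (sW : W ⟶ Spec (CommRingCat.of (𝓞 K))) (sX : X ⟶ Spec (CommRingCat.of (𝓞 K)))
    [LocallyOfFiniteType sW] [QuasiCompact sW]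
    [LocallyOfFiniteType sX] [QuasiCompact sX]
    (q : W ⟶ X) [IsProper q] (hqS : q ≫ sX = sW)
    (hbir : ∃ (V : W.Opens) (U : X.Opens),
      Dense (V : Set W) ∧ Dense (U : Set X) ∧
      ∃ e : (V : Scheme) ⟶ (U : Scheme), IsIso e ∧ e ≫ U.ι = V.ι ≫ q)
    (w : W) (hw : IsClosed ({w} : Set W))
    (φ : W.presheaf.stalk w →+*
      AdicCompletion (IsLocalRing.maximalIdeal (X.presheaf.stalk (q.base w)))
        (X.presheaf.stalk (q.base w)))
    (hφloc : IsLocalHom φ)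
    (hφsec : ∀ a : X.presheaf.stalk (q.base w),
      φ (q.stalkMap w a) =
        algebraMap (X.presheaf.stalk (q.base w))
          (AdicCompletion (IsLocalRing.maximalIdeal (X.presheaf.stalk (q.base w)))
            (X.presheaf.stalk (q.base w))) a) :
    IsIso (q.stalkMap w) := by
  obtain ⟨V, U, hVd, hUd, e, he, hcomm⟩ := hbir
  haveI : Nonempty V := by
    obtain ⟨v, hv⟩ := hVd.nonempty
    exact ⟨⟨v, hv⟩⟩
  haveI : Nonempty U := by
    obtain ⟨u, hu⟩ := hUd.nonempty
    exact ⟨⟨u, hu⟩⟩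
  haveI : IsDomain (X.presheaf.stalk (q.base w)) := AuxFormalSection.stalk_isDomain X _
  haveI : IsDomain (W.presheaf.stalk w) := AuxFormalSection.stalk_isDomain W w
  haveI hNB : IsNoetherianRing (CommRingCat.of (𝓞 K)) :=
    inferInstanceAs (IsNoetherianRing (𝓞 K))
  haveI : IsNoetherianRing (X.presheaf.stalk (q.base w)) :=
    AuxFormalSection.stalk_isNoetherian X sX _
  -- Injectivity of the stalk map
  have hinj : Function.Injective (q.stalkMap w) := by
    intro a b hab
    have h0 : q.stalkMap w (a - b) = 0 := by rw [map_sub, hab, sub_self]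
    have h1 : algebraMap (X.presheaf.stalk (q.base w))
          (AdicCompletion (IsLocalRing.maximalIdeal (X.presheaf.stalk (q.base w)))
            (X.presheaf.stalk (q.base w))) (a - b)
        = algebraMap (X.presheaf.stalk (q.base w))
          (AdicCompletion (IsLocalRing.maximalIdeal (X.presheaf.stalk (q.base w)))
            (X.presheaf.stalk (q.base w))) (0 : X.presheaf.stalk (q.base w)) * 0 := by
      rw [← hφsec (a - b), h0, map_zero, map_zero, zero_mul]
    have h2 := AuxFormalSection.mem_span_of_adicCompletion (a - b) 0 0 h1
    rw [Ideal.span_singleton_eq_bot.mpr rfl, Ideal.mem_bot] at h2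
    exact sub_eq_zero.mp h2
  -- Surjectivity of the stalk map
  have hgen := AuxFormalSection.generic_image q V U hUd e he hcomm
  have hiso := AuxFormalSection.generic_stalkMap_iso q V U ‹_› e he hcomm
  have hsW : (genericPoint W : W) ⤳ w := (genericPoint_spec W).specializes trivial
  have hsurj : Function.Surjective (q.stalkMap w) := by
    intro b
    haveI := hiso
    obtain ⟨z, hz⟩ := (asIso
      (q.stalkMap (genericPoint W))).commRingCatIsoToRingEquiv.surjective
      (W.presheaf.stalkSpecializes hsW b)
    have hz : q.stalkMap (genericPoint W) z = W.presheaf.stalkSpecializes hsW b := hz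
    obtain ⟨a, a', ha'0, hfrac⟩ :=
      AuxFormalSection.stalk_exists_frac hgen (q.base.hom.map_specializes hsW) z
    have hcomm2 : ∀ y, q.stalkMap (genericPoint W)
        (X.presheaf.stalkSpecializes (q.base.hom.map_specializes hsW) y)
        = W.presheaf.stalkSpecializes hsW (q.stalkMap w y) :=
      fun y => Scheme.Hom.stalkSpecializes_stalkMap_apply q (genericPoint W) w hsW y
    have h5 := congrArg (q.stalkMap (genericPoint W)) hfrac
    rw [map_mul, hz, hcomm2, hcomm2] at h5
    have h6 : W.presheaf.stalkSpecializes hsW (b * q.stalkMap w a')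
        = W.presheaf.stalkSpecializes hsW (q.stalkMap w a) := by
      rw [map_mul]; exact h5
    have h7 := AuxFormalSection.stalkSpecializes_injective (genericPoint_spec W) hsW h6
    -- now b * f a' = f a; use the formal section
    have h8 : algebraMap (X.presheaf.stalk (q.base w))
          (AdicCompletion (IsLocalRing.maximalIdeal (X.presheaf.stalk (q.base w)))
            (X.presheaf.stalk (q.base w))) a
        = algebraMap (X.presheaf.stalk (q.base w))
          (AdicCompletion (IsLocalRing.maximalIdeal (X.presheaf.stalk (q.base w)))
            (X.presheaf.stalk (q.base w))) a' * φ b := by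
      rw [← hφsec a, ← hφsec a', ← h7, map_mul, mul_comm]
    obtain ⟨r, hr⟩ := Ideal.mem_span_singleton.mp
      (AuxFormalSection.mem_span_of_adicCompletion a a' (φ b) h8)
    refine ⟨r, ?_⟩
    have hfa' : q.stalkMap w a' ≠ 0 := by
      intro hz0
      apply ha'0
      have h9 : algebraMap (X.presheaf.stalk (q.base w))
            (AdicCompletion (IsLocalRing.maximalIdeal (X.presheaf.stalk (q.base w)))
              (X.presheaf.stalk (q.base w))) a'
          = algebraMap (X.presheaf.stalk (q.base w))
            (AdicCompletion (IsLocalRing.maximalIdeal (X.presheaf.stalk (q.base w)))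
              (X.presheaf.stalk (q.base w))) (0 : X.presheaf.stalk (q.base w)) * 0 := by
        rw [← hφsec a', hz0, map_zero, map_zero, zero_mul]
      have h10 := AuxFormalSection.mem_span_of_adicCompletion a' 0 0 h9
      rwa [Ideal.span_singleton_eq_bot.mpr rfl, Ideal.mem_bot] at h10
    apply mul_left_cancel₀ hfa'
    calc q.stalkMap w a' * q.stalkMap w r = q.stalkMap w a := by rw [← map_mul, ← hr]
      _ = b * q.stalkMap w a' := h7.symm
      _ = q.stalkMap w a' * b := mul_comm _ _
  have hbij : Function.Bijective (q.stalkMap w) := ⟨hinj, hsurj⟩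
  exact (ConcreteCategory.isIso_iff_bijective _).mpr hbij
end

section
/- Let K be a field of characteristic zero, V a finite-dimensional K-vector space, and let s, u ∈ GL(V) be commuting automorphisms such that s is semisimple (its minimal polynomial is squarefree) and u is unipotent (u − 1 is nilpotent). Then for every positive integer m there exists h ∈ GL(V) commuting with s such that h⁻¹ u h = uᵐ. -/
open Polynomial

namespace ConjUnip

variable {K V : Type*} [Field K] [AddCommGroup V] [Module K V]

variable (N : ℕ) (W : Fin N → Submodule K V)

/-- The assembly map sending a family of "Jordan generators" to its combination via powers of
`y`. Block `j` has size `j.1 + 1`. -/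
def Phi (y : Module.End K V) :
    ((j : Fin N) → (Fin (j.1 + 1) → W j)) →ₗ[K] V where
  toFun x := ∑ j : Fin N, ∑ i : Fin (j.1 + 1), (y ^ (i : ℕ)) (x j i : V)
  map_add' a b := by
    simp only [Pi.add_apply, Submodule.coe_add, map_add]
    rw [← Finset.sum_add_distrib]
    exact Finset.sum_congr rfl fun j _ => Finset.sum_add_distrib
  map_smul' c a := by
    simp only [Pi.smul_apply, Submodule.coe_smul, map_smul, RingHom.id_apply]
    rw [Finset.smul_sum]
    exact Finset.sum_congr rfl fun j _ => (Finset.smul_sum).symm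

lemma Phi_single (y : Module.End K V) (j : Fin N) (i : Fin (j.1 + 1)) (v : W j) :
    Phi N W y (Pi.single j (Pi.single i v)) = (y ^ (i : ℕ)) (v : V) := by
  classical
  rw [Phi]
  simp only [LinearMap.coe_mk, AddHom.coe_mk]
  rw [Finset.sum_eq_single j]
  · rw [Finset.sum_eq_single i]
    · simp
    · intro b _ hb; simp [Pi.single_eq_of_ne hb]
    · simp
  · intro b _ hb
    simp [Pi.single_eq_of_ne hb]
  · simp

/-- The shift map on the domain of `Phi`. -/
def shiftD : ((j : Fin N) → (Fin (j.1 + 1) → W j)) →ₗ[K]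
    ((j : Fin N) → (Fin (j.1 + 1) → W j)) where
  toFun x j i := if h : 0 < (i : ℕ) then x j ⟨(i : ℕ) - 1, by omega⟩ else 0
  map_add' a b := by
    funext j i
    by_cases h : 0 < (i : ℕ) <;> simp [h, -Fin.val_pos_iff]
  map_smul' c a := by
    funext j i
    by_cases h : 0 < (i : ℕ) <;> simp [h, -Fin.val_pos_iff]

lemma Phi_shift (y : Module.End K V)
    (Htop : ∀ (j : Fin N) (v : W j), (y ^ (j.1 + 1)) (v : V) = 0) (x) :
    Phi N W y (shiftD N W x) = y (Phi N W y x) := by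
  rw [Phi]
  simp only [LinearMap.coe_mk, AddHom.coe_mk, map_sum]
  refine Finset.sum_congr rfl fun j _ => ?_
  rw [Fin.sum_univ_succ, Fin.sum_univ_castSucc (n := j.1)
    (f := fun i : Fin (j.1 + 1) => y ((y ^ (i : ℕ)) (x j i : V)))]
  have h0 : (shiftD N W x) j 0 = 0 := by simp [shiftD]
  rw [h0]
  simp only [map_zero, ZeroMemClass.coe_zero, map_zero, zero_add]
  have hlast : y ((y ^ ((Fin.last j.1 : Fin (j.1+1)) : ℕ)) (x j (Fin.last j.1) : V)) = 0 := by
    have : (y ^ (j.1 + 1)) (x j (Fin.last j.1) : V) = 0 := Htop j _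
    rw [pow_succ', Module.End.mul_apply] at this
    simpa using this
  rw [hlast, add_zero]
  refine Finset.sum_congr rfl fun i _ => ?_
  have hs : (shiftD N W x) j i.succ = x j i.castSucc := by
    have : (0:ℕ) < (i.succ : ℕ) := by simp
    simp only [shiftD, LinearMap.coe_mk, AddHom.coe_mk, this, dite_true]
    exact congrArg (x j) (by ext; simp)
  rw [hs]
  have : ((i.succ : Fin (j.1+1)) : ℕ) = ((i.castSucc : Fin (j.1+1)) : ℕ) + 1 := by simp
  rw [this, pow_succ']
  rfl




lemma Phi_apply (y : Module.End K V) (x) :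
    Phi N W y x = ∑ j : Fin N, ∑ i : Fin (j.1 + 1), (y ^ (i : ℕ)) (x j i : V) := rfl

/-- Componentwise action of an endomorphism preserving each `W j`. -/
def mapD (g : Module.End K V) (hg : ∀ j : Fin N, ∀ v ∈ W j, g v ∈ W j) :
    ((j : Fin N) → (Fin (j.1 + 1) → W j)) →ₗ[K]
    ((j : Fin N) → (Fin (j.1 + 1) → W j)) where
  toFun x j i := ⟨g (x j i : V), hg j _ (x j i).2⟩
  map_add' a b := by
    funext j i
    ext
    simp
  map_smul' c a := by
    funext j i
    ext
    simp

lemma Phi_mapD (y g : Module.End K V) (hg : ∀ j : Fin N, ∀ v ∈ W j, g v ∈ W j)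
    (hc : Commute g y) (x) :
    Phi N W y (mapD N W g hg x) = g (Phi N W y x) := by
  rw [Phi_apply, Phi_apply, map_sum]
  refine Finset.sum_congr rfl fun j _ => ?_
  rw [map_sum]
  refine Finset.sum_congr rfl fun i _ => ?_
  have : (y ^ (i : ℕ)) * g = g * (y ^ (i : ℕ)) := (hc.pow_right (i : ℕ)).symm
  calc (y ^ (i : ℕ)) ((mapD N W g hg x) j i : V) = ((y ^ (i : ℕ)) * g) (x j i : V) := rfl
    _ = (g * (y ^ (i : ℕ))) (x j i : V) := by rw [this]
    _ = g ((y ^ (i : ℕ)) (x j i : V)) := rfl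

lemma coeff_one_add_X_pow (m : ℕ) :
    (((1 + X) ^ m : K[X]).coeff 1) = m ∧ (((1 + X) ^ m : K[X]).coeff 0) = 1 := by
  induction m with
  | zero => simp [coeff_one]
  | succ m ih =>
    rw [pow_succ, mul_add, mul_one]
    constructor
    · rw [coeff_add, coeff_mul_X, ih.1, ih.2]; push_cast; ring
    · rw [coeff_add, ih.2]
      have : (((1 + X) ^ m * X : K[X])).coeff 0 = 0 := by
        simp [coeff_zero_eq_eval_zero]
      rw [this, add_zero]

/-- Auxiliary commutation: anything commuting with `b` commutes with `aeval b p`. -/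
lemma commute_aeval {A : Type*} [Ring A] [Algebra K A] {a b : A} (h : Commute a b) (p : K[X]) :
    Commute a (aeval b p) := by
  induction p using Polynomial.induction_on' with
  | add p q hp hq => rw [map_add]; exact hp.add_right hq
  | monomial k c =>
    rw [aeval_monomial]
    exact Commute.mul_right ((Algebra.commutes c a).symm) (Commute.pow_right h k)



lemma poly_facts (m : ℕ) :
    ∃ Wp : K[X], ((1 + X) ^ m - 1 : K[X]) = X * Wp ∧
      (∀ t : ℕ, ∃ Q : K[X], ((1 + X) ^ m - 1 : K[X]) ^ t
        = C ((m : K) ^ t) * X ^ t + X ^ (t + 1) * Q) := by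
  set G : K[X] := (1 + X) ^ m - 1 with hG
  have hG0 : G.coeff 0 = 0 := by
    rw [hG, coeff_sub, (coeff_one_add_X_pow m).2, coeff_one]; simp
  have hGX : G = X * G.divX := by
    conv_lhs => rw [← X_mul_divX_add G, hG0]
    simp
  refine ⟨G.divX, hGX, fun t => ?_⟩
  have hW0 : (G.divX).coeff 0 = (m : K) := by
    rw [coeff_divX, hG, coeff_sub, (coeff_one_add_X_pow m).1, coeff_one]; simp
  set P : K[X] := G.divX ^ t - C ((m : K) ^ t) with hP
  have hP0 : P.coeff 0 = 0 := by
    have h1 : (G.divX ^ t).coeff 0 = (m : K) ^ t := by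
      rw [coeff_zero_eq_eval_zero, eval_pow]
      rw [show (eval 0 G.divX) = G.divX.coeff 0 from (coeff_zero_eq_eval_zero _).symm, hW0]
    rw [hP, coeff_sub, h1, coeff_C]
    simp
  have hPX : P = X * P.divX := by
    conv_lhs => rw [← X_mul_divX_add P, hP0]
    simp
  refine ⟨P.divX, ?_⟩
  have : G ^ t = X ^ t * G.divX ^ t := by
    rw [show G ^ t = (X * G.divX) ^ t from by rw [← hGX], mul_pow]
  rw [this]
  have : G.divX ^ t = C ((m : K) ^ t) + X * P.divX := by rw [← hPX, hP]; ring
  rw [this]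
  ring


theorem aux [FiniteDimensional K V] (s n y : Module.End K V) (N : ℕ) (hn : n ^ N = 0)
    (hss : s.IsSemisimple)
    (hsn : s * n = n * s) (hsy : s * y = y * s)
    (w : Module.End K V) (hw : y = n * w) (hnw : n * w = w * n)
    (a : K) (ha : a ≠ 0)
    (hrep : ∀ t : ℕ, ∃ c : Module.End K V, y ^ t = a ^ t • n ^ t + n ^ (t + 1) * c) :
    ∃ h : V ≃ₗ[K] V, (∀ v, h (s v) = s (h v)) ∧ (∀ v, h (n v) = y (h v)) := by
  classical
  -- kernels and range
  set Kk : ℕ → Submodule K V := fun t => LinearMap.ker (n ^ t) with hKk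
  set I : Submodule K V := LinearMap.range n with hI
  have hKmono : ∀ {t₁ t₂ : ℕ}, t₁ ≤ t₂ → Kk t₁ ≤ Kk t₂ := by
    intro t₁ t₂ h v hv
    simp only [hKk, LinearMap.mem_ker] at hv ⊢
    rw [← Nat.sub_add_cancel h, pow_add, Module.End.mul_apply, hv, map_zero]
  have hKtop : Kk N = ⊤ := by
    simp [hKk, hn]
  -- invariance of the filtration under s
  have hsKk : ∀ t, ∀ v ∈ Kk t, s v ∈ Kk t := by
    intro t v hv
    simp only [hKk, LinearMap.mem_ker] at hv ⊢
    have hc : Commute s (n ^ t) := (Commute.pow_right hsn t)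
    calc (n ^ t) (s v) = ((n ^ t) * s) v := rfl
      _ = (s * (n ^ t)) v := by rw [hc]
      _ = s ((n ^ t) v) := rfl
      _ = 0 := by rw [hv, map_zero]
  have hsI : ∀ v ∈ I, s v ∈ I := by
    rintro v ⟨b, rfl⟩
    exact ⟨s b, by calc n (s b) = (n * s) b := rfl
      _ = (s * n) b := by rw [hsn]
      _ = s (n b) := rfl⟩
  -- choose the generating subspaces
  have hWex : ∀ j : Fin N, ∃ Wj : Submodule K V,
      (∀ v ∈ Wj, s v ∈ Wj) ∧ Wj ≤ Kk (j.1 + 1) ∧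
      Wj ⊓ (Kk j.1 ⊔ (I ⊓ Kk (j.1 + 1))) = ⊥ ∧
      (Kk j.1 ⊔ (I ⊓ Kk (j.1 + 1))) ⊔ Wj = Kk (j.1 + 1) := by
    intro j
    set P := Kk (j.1 + 1) with hP
    set A := Kk j.1 ⊔ (I ⊓ Kk (j.1 + 1)) with hA
    have hAinvt : A ∈ s.invtSubmodule := by
      rw [Module.End.mem_invtSubmodule]
      intro v hv
      rw [Submodule.mem_comap]
      rcases Submodule.mem_sup.mp hv with ⟨k, hk, r, hr, rfl⟩
      rw [map_add]
      have hr' := Submodule.mem_inf.mp hr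
      exact Submodule.add_mem_sup (hsKk _ _ hk)
        (Submodule.mem_inf.mpr ⟨hsI _ hr'.1, hsKk _ _ hr'.2⟩)
    obtain ⟨q, hq, hcompl⟩ := (Module.End.isSemisimple_iff.mp hss) A hAinvt
    have hAP : A ≤ P := sup_le (hKmono (Nat.le_succ _)) inf_le_right
    refine ⟨P ⊓ q, ?_, inf_le_left, ?_, ?_⟩
    · intro v hv
      have hv' := Submodule.mem_inf.mp hv
      refine Submodule.mem_inf.mpr ⟨hsKk _ _ hv'.1, ?_⟩
      have := (Module.End.mem_invtSubmodule s).mp hq hv'.2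
      exact Submodule.mem_comap.mp this
    · refine le_bot_iff.mp ?_
      calc P ⊓ q ⊓ A ≤ q ⊓ A := inf_le_inf_right A inf_le_right
        _ = A ⊓ q := inf_comm q A
        _ = ⊥ := hcompl.disjoint.eq_bot
    · have h1 : (A ⊔ q) ⊓ P = A ⊔ q ⊓ P := sup_inf_assoc_of_le q hAP
      rw [inf_comm P q, ← h1, hcompl.sup_eq_top, top_inf_eq]
  choose W hW1 hW2 hW3 hW4 using hWex
  -- basic commutation facts
  have hcwn : Commute w n := hnw.symm
  have hyt : ∀ t : ℕ, y ^ t = w ^ t * n ^ t := by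
    intro t
    rw [hw, hnw, hcwn.mul_pow]
  have Htopn : ∀ (j : Fin N) (v : W j), (n ^ (j.1 + 1)) (v : V) = 0 := by
    intro j v
    exact LinearMap.mem_ker.mp (hW2 j v.2)
  have Htopy : ∀ (j : Fin N) (v : W j), (y ^ (j.1 + 1)) (v : V) = 0 := by
    intro j v
    rw [hyt, Module.End.mul_apply, Htopn j v, map_zero]
  -- surjectivity of the assembly map for n
  set R := LinearMap.range (Phi N W n) with hR
  have hWmem : ∀ (j : Fin N) (i : Fin (j.1 + 1)) (v : W j), (n ^ (i : ℕ)) (v : V) ∈ R := by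
    intro j i v
    exact ⟨Pi.single j (Pi.single i v), Phi_single N W n j i v⟩
  have hRn : ∀ v ∈ R, n v ∈ R := by
    rintro v ⟨x, rfl⟩
    exact ⟨shiftD N W x, Phi_shift N W n Htopn x⟩
  have hRmap : ∀ t : ℕ, Submodule.map (n ^ t) R ≤ R := by
    intro t
    induction t with
    | zero =>
      rintro v ⟨b, hb, rfl⟩
      simpa using hb
    | succ t ih =>
      rintro v ⟨b, hb, rfl⟩
      rw [pow_succ, Module.End.mul_apply]
      exact ih ⟨n b, hRn b hb, rfl⟩
  have lemA : ∀ t : ℕ, t ≤ N → Kk t ≤ R ⊔ Submodule.map n (Kk (t + 1)) := by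
    intro t
    induction t with
    | zero =>
      intro _
      have : Kk 0 = ⊥ := by
        rw [hKk]
        simp [Module.End.one_eq_id]
      rw [this]
      exact bot_le
    | succ t ih =>
      intro ht
      have ht' : t < N := by omega
      have h4 := hW4 ⟨t, ht'⟩
      simp only [Fin.val_mk] at h4
      rw [← h4]
      refine sup_le (sup_le ?_ ?_) ?_
      · refine le_trans (ih (by omega)) (sup_le le_sup_left ?_)
        refine le_trans (Submodule.map_mono (hKmono (by omega))) le_sup_right
      · intro v hv
        obtain ⟨hv1, hv2⟩ := Submodule.mem_inf.mp hv
        obtain ⟨b, rfl⟩ := hv1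
        refine Submodule.mem_sup_right ⟨b, ?_, rfl⟩
        show b ∈ Kk (t + 2)
        simp only [hKk, LinearMap.mem_ker] at hv2 ⊢
        rw [pow_succ, Module.End.mul_apply]
        exact hv2
      · intro v hv
        have := hWmem ⟨t, ht'⟩ ⟨0, by omega⟩ ⟨v, hv⟩
        simpa using Submodule.mem_sup_left this
  have lemB : ∀ t : ℕ, (⊤ : Submodule K V) ≤ R ⊔ Submodule.map (n ^ t) ⊤ := by
    intro t
    induction t with
    | zero =>
      rw [pow_zero, Module.End.one_eq_id, Submodule.map_id]
      exact le_sup_right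
    | succ t ih =>
      have h1 : Submodule.map (n ^ t) ⊤ ≤ R ⊔ Submodule.map (n ^ (t + 1)) ⊤ := by
        calc Submodule.map (n ^ t) ⊤ = Submodule.map (n ^ t) (Kk N) := by rw [hKtop]
          _ ≤ Submodule.map (n ^ t) (R ⊔ Submodule.map n (Kk (N + 1))) :=
              Submodule.map_mono (lemA N le_rfl)
          _ = Submodule.map (n ^ t) R ⊔ Submodule.map (n ^ t) (Submodule.map n (Kk (N + 1))) :=
              Submodule.map_sup _ _ _
          _ ≤ R ⊔ Submodule.map (n ^ (t + 1)) ⊤ := by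
              refine sup_le_sup (hRmap t) ?_
              rw [← Submodule.map_comp, ← Module.End.mul_eq_comp, ← pow_succ]
              exact Submodule.map_mono le_top
      exact le_trans ih (sup_le le_sup_left h1)
  have surjn : Function.Surjective (Phi N W n) := by
    rw [← LinearMap.range_eq_top, ← hR]
    have := lemB N
    rw [hn] at this
    rw [Submodule.map_zero, sup_bot_eq] at this
    exact top_le_iff.mp this
  have injn : Function.Injective (Phi N W n) := by
    rw [← LinearMap.ker_eq_bot]
    rw [Submodule.eq_bot_iff]
    intro x hx
    rw [LinearMap.mem_ker, Phi_apply] at hx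
    suffices H : ∀ d i₀ : ℕ, N ≤ i₀ + d →
        (∀ (j : Fin N) (i : Fin (j.1 + 1)), (i : ℕ) < i₀ → x j i = 0) →
        ∀ (j : Fin N) (i : Fin (j.1 + 1)), x j i = 0 by
      funext j i
      exact H N 0 (by omega) (fun j i h => absurd h (by omega)) j i
    intro d
    induction d with
    | zero =>
      intro i₀ hN0 hbelow j i
      exact hbelow j i (by have := i.2; have := j.2; omega)
    | succ d ih =>
      intro i₀ hNd hbelow
      have key : ∀ e (j₁ : Fin N), N ≤ j₁.1 + e → ∀ (hi : i₀ < j₁.1 + 1), x j₁ ⟨i₀, hi⟩ = 0 := by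
        intro e
        induction e with
        | zero =>
          intro j₁ hj₁ hi
          exact absurd hj₁ (by have := j₁.2; omega)
        | succ e ihe =>
          intro j₁ hj₁ hi
          have hhigher : ∀ (j : Fin N) (hij : i₀ < j.1 + 1), j₁.1 < j.1 → x j ⟨i₀, hij⟩ = 0 := by
            intro j hij hgt
            exact ihe j (by omega) hij
          set ξ : V := (x j₁ ⟨i₀, hi⟩ : V) with hξ
          set z : V := ∑ j : Fin N, ∑ i : Fin (j.1 + 1),
            (if i₀ ≤ (i : ℕ) then (n ^ ((i : ℕ) - i₀)) (x j i : V) else 0) with hz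
          set Cv : V := ∑ j : Fin N, ∑ i : Fin (j.1 + 1),
            (if i₀ + 1 ≤ (i : ℕ) then (n ^ ((i : ℕ) - i₀ - 1)) (x j i : V) else 0) with hCv
          set z₀ : V := ∑ j : Fin N, ∑ i : Fin (j.1 + 1),
            (if (i : ℕ) = i₀ then (x j i : V) else 0) with hz0
          have hzK : z ∈ Kk i₀ := by
            have step : (n ^ i₀) z
                = ∑ j : Fin N, ∑ i : Fin (j.1 + 1), (n ^ (i : ℕ)) (x j i : V) := by
              rw [hz, map_sum]
              refine Finset.sum_congr rfl fun j _ => ?_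
              rw [map_sum]
              refine Finset.sum_congr rfl fun i _ => ?_
              by_cases hc : i₀ ≤ (i : ℕ)
              · rw [if_pos hc]
                have he : i₀ + ((i : ℕ) - i₀) = (i : ℕ) := by omega
                conv_rhs => rw [← he, pow_add]
                rw [Module.End.mul_apply]
              · rw [if_neg hc, hbelow j i (by omega)]
                simp
            show z ∈ LinearMap.ker (n ^ i₀)
            rw [LinearMap.mem_ker, step, hx]
          have hsplit : z = z₀ + n Cv := by
            rw [hz, hz0, hCv, map_sum, ← Finset.sum_add_distrib]
            refine Finset.sum_congr rfl fun j _ => ?_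
            rw [map_sum, ← Finset.sum_add_distrib]
            refine Finset.sum_congr rfl fun i _ => ?_
            rcases Nat.lt_trichotomy (i : ℕ) i₀ with hlt | heq | hgt
            · rw [if_neg (show ¬ i₀ ≤ (i : ℕ) by omega), if_neg (show ¬ (i : ℕ) = i₀ by omega),
                if_neg (show ¬ i₀ + 1 ≤ (i : ℕ) by omega)]
              simp
            · rw [if_pos (show i₀ ≤ (i : ℕ) by omega), if_pos heq,
                if_neg (show ¬ i₀ + 1 ≤ (i : ℕ) by omega), heq]
              simp
            · rw [if_pos (show i₀ ≤ (i : ℕ) by omega), if_neg (show ¬ (i : ℕ) = i₀ by omega),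
                if_pos (show i₀ + 1 ≤ (i : ℕ) by omega)]
              rw [zero_add]
              have he : n ^ ((i : ℕ) - i₀) = n * n ^ ((i : ℕ) - i₀ - 1) := by
                rw [← pow_succ']
                congr 1
                omega
              rw [he, Module.End.mul_apply]
          have hinner : (∑ i : Fin (j₁.1 + 1), (if (i : ℕ) = i₀ then (x j₁ i : V) else 0)) = ξ := by
            rw [Finset.sum_eq_single_of_mem ⟨i₀, hi⟩ (Finset.mem_univ _)]
            · rw [if_pos rfl]
            · intro b _ hb
              rw [if_neg (fun hbv => hb (Fin.ext hbv))]
          have hz0' : z₀ - ξ ∈ Kk j₁.1 := by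
            rw [hz0, ← Finset.sum_erase_add _ _ (Finset.mem_univ j₁), hinner,
              add_sub_cancel_right]
            refine Submodule.sum_mem _ fun j hj => Submodule.sum_mem _ fun i _ => ?_
            have hjne : j ≠ j₁ := (Finset.mem_erase.mp hj).1
            by_cases hc : (i : ℕ) = i₀
            · rw [if_pos hc]
              rcases Nat.lt_or_ge j.1 j₁.1 with hlt | hge
              · exact hKmono (show j.1 + 1 ≤ j₁.1 by omega) (hW2 j (x j i).2)
              · have hgt : j₁.1 < j.1 := by
                  rcases Nat.lt_or_ge j₁.1 j.1 with h | h
                  · exact h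
                  · exact absurd (Fin.ext (by omega : j.1 = j₁.1)) hjne
                have hij : i₀ < j.1 + 1 := by have := i.2; omega
                have : x j ⟨i₀, hij⟩ = 0 := hhigher j hij hgt
                have hieq : i = ⟨i₀, hij⟩ := Fin.ext (show (i : ℕ) = i₀ from hc)
                rw [hieq, this]
                simp
            · rw [if_neg hc]
              exact Submodule.zero_mem _
          have hknC : n Cv ∈ Kk (j₁.1 + 1) := by
            have h1 : n Cv = (z - (z₀ - ξ)) - ξ := by
              rw [hsplit]
              abel
            rw [h1]
            refine Submodule.sub_mem _ (Submodule.sub_mem _ ?_ ?_) (hW2 j₁ (x j₁ ⟨i₀, hi⟩).2)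
            · exact hKmono (by omega) hzK
            · exact hKmono (by omega) hz0'
          have hmem : ξ ∈ W j₁ ⊓ (Kk j₁.1 ⊔ (I ⊓ Kk (j₁.1 + 1))) := by
            refine Submodule.mem_inf.mpr ⟨(x j₁ ⟨i₀, hi⟩).2, ?_⟩
            have h1 : ξ = (z - (z₀ - ξ)) - n Cv := by
              rw [hsplit]
              abel
            rw [h1]
            refine Submodule.sub_mem _ ?_ ?_
            · exact Submodule.mem_sup_left
                (Submodule.sub_mem _ (hKmono (by omega) hzK) hz0')
            · exact Submodule.mem_sup_right (Submodule.mem_inf.mpr ⟨⟨Cv, rfl⟩, hknC⟩)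
          rw [hW3 j₁] at hmem
          have hv0 : ξ = 0 := by simpa using hmem
          rw [hξ] at hv0
          exact Subtype.ext (by simpa using hv0)
      have hbelow' : ∀ (j : Fin N) (i : Fin (j.1 + 1)), (i : ℕ) < i₀ + 1 → x j i = 0 := by
        intro j i hi
        rcases Nat.lt_or_ge (i : ℕ) i₀ with h | h
        · exact hbelow j i h
        · have hieq : (i : ℕ) = i₀ := by omega
          have hi2 : i₀ < j.1 + 1 := by have := i.2; omega
          have := key N j (show N ≤ j.1 + N by omega) hi2
          rwa [show (⟨i₀, hi2⟩ : Fin (j.1 + 1)) = i from Fin.ext (show i₀ = (i : ℕ) by omega)]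
            at this
      exact ih (i₀ + 1) (by omega) hbelow'
  have surjy : Function.Surjective (Phi N W y) := by
    set Ry := LinearMap.range (Phi N W y) with hRy
    have hWy : ∀ (j : Fin N) (i : Fin (j.1 + 1)) (v : W j), (y ^ (i : ℕ)) (v : V) ∈ Ry := by
      intro j i v
      exact ⟨Pi.single j (Pi.single i v), Phi_single N W y j i v⟩
    have main : ∀ d t : ℕ, N ≤ t + d → ∀ v : V, (n ^ t) v ∈ Ry := by
      intro d
      induction d with
      | zero =>
        intro t ht v
        have hz : n ^ t = 0 := by
          rw [← Nat.sub_add_cancel (show N ≤ t by omega), pow_add, hn, mul_zero]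
        rw [hz]
        simp
      | succ d ihd =>
        intro t ht v
        obtain ⟨x, rfl⟩ := surjn v
        rw [Phi_apply, map_sum]
        refine Submodule.sum_mem _ fun j _ => ?_
        rw [map_sum]
        refine Submodule.sum_mem _ fun i _ => ?_
        have hterm : (n ^ t) ((n ^ (i : ℕ)) (x j i : V)) = (n ^ (t + (i : ℕ))) (x j i : V) := by
          rw [pow_add, Module.End.mul_apply]
        rw [hterm]
        by_cases hc : j.1 + 1 ≤ t + (i : ℕ)
        · have hz : (n ^ (t + (i : ℕ))) (x j i : V) = 0 := by
            rw [← Nat.sub_add_cancel hc, pow_add, Module.End.mul_apply, Htopn j (x j i),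
              map_zero]
          rw [hz]
          exact Submodule.zero_mem _
        · obtain ⟨c, hc'⟩ := hrep (t + (i : ℕ))
          have happ : (y ^ (t + (i : ℕ))) (x j i : V)
              = a ^ (t + (i : ℕ)) • (n ^ (t + (i : ℕ))) (x j i : V)
                + (n ^ (t + (i : ℕ) + 1)) (c (x j i : V)) := by
            rw [hc']
            simp [Module.End.mul_apply]
          have h1 : (y ^ (t + (i : ℕ))) (x j i : V) ∈ Ry := by
            have := hWy j ⟨t + (i : ℕ), by omega⟩ (x j i)
            simpa using this
          have h2 : (n ^ (t + (i : ℕ) + 1)) (c (x j i : V)) ∈ Ry := by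
            have := ihd (t + 1) (by omega) ((n ^ (i : ℕ)) (c (x j i : V)))
            have he : (n ^ (t + 1)) ((n ^ (i : ℕ)) (c (x j i : V)))
                = (n ^ (t + (i : ℕ) + 1)) (c (x j i : V)) := by
              rw [← Module.End.mul_apply, ← pow_add]
              congr 2
              omega
            rwa [he] at this
          have h3 : a ^ (t + (i : ℕ)) • (n ^ (t + (i : ℕ))) (x j i : V) ∈ Ry := by
            have : a ^ (t + (i : ℕ)) • (n ^ (t + (i : ℕ))) (x j i : V)
                = (y ^ (t + (i : ℕ))) (x j i : V) - (n ^ (t + (i : ℕ) + 1)) (c (x j i : V)) := by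
              rw [happ]
              abel
            rw [this]
            exact Submodule.sub_mem _ h1 h2
          have h4 := Submodule.smul_mem Ry (a ^ (t + (i : ℕ)))⁻¹ h3
          rwa [smul_smul, inv_mul_cancel₀ (pow_ne_zero _ ha), one_smul] at h4
    intro v
    have := main N 0 (by omega) v
    rw [pow_zero] at this
    obtain ⟨x, hx⟩ := by simpa using this
    exact ⟨x, hx⟩
  -- assemble the equivalence
  let en := LinearEquiv.ofBijective (Phi N W n) ⟨injn, surjn⟩
  have hfr : Module.finrank K ((j : Fin N) → (Fin (j.1 + 1) → W j)) = Module.finrank K V :=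
    en.finrank_eq
  have injy : Function.Injective (Phi N W y) :=
    (LinearMap.injective_iff_surjective_of_finrank_eq_finrank hfr).mpr surjy
  let ey := LinearEquiv.ofBijective (Phi N W y) ⟨injy, surjy⟩
  have e1 : ∀ z, (en.symm.trans ey) (Phi N W n z) = Phi N W y z := by
    intro z
    rw [LinearEquiv.trans_apply]
    have h1 : en.symm (Phi N W n z) = z := by
      have : Phi N W n z = en z := rfl
      rw [this, LinearEquiv.symm_apply_apply]
    rw [h1]
    rfl
  refine ⟨en.symm.trans ey, ?_, ?_⟩
  · intro v
    obtain ⟨x, rfl⟩ := surjn v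
    rw [← Phi_mapD N W n s hW1 hsn x, e1, e1, Phi_mapD N W y s hW1 hsy x]
  · intro v
    obtain ⟨x, rfl⟩ := surjn v
    rw [← Phi_shift N W n Htopn x, e1, e1, Phi_shift N W y Htopy x]



end ConjUnip

/-- Let `K` be a field of characteristic zero, `V` a finite-dimensional `K`-vector space, and
`s, u ∈ GL(V)` commuting automorphisms with `s` semisimple (squarefree minimal polynomial) and
`u` unipotent (`u - 1` nilpotent). Then for every positive integer `m` there exists
`h ∈ GL(V)` commuting with `s` such that `h⁻¹ * u * h = u ^ m`. -/
theorem conjugate_unipotent_to_power_in_centralizer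
    (K : Type*) [Field K] [CharZero K]
    (V : Type*) [AddCommGroup V] [Module K V] [FiniteDimensional K V]
    (s u : (Module.End K V)ˣ)
    (hcomm : s * u = u * s)
    (hs : Squarefree (minpoly K (s : Module.End K V)))
    (hu : IsNilpotent ((u : Module.End K V) - 1)) :
    ∀ m : ℕ, 0 < m → ∃ h : (Module.End K V)ˣ,
      h * s = s * h ∧ h⁻¹ * u * h = u ^ m := by
  intro m hm
  classical
  set n : Module.End K V := (u : Module.End K V) - 1 with hn_def
  obtain ⟨N, hN⟩ := hu
  have hsu : (s : Module.End K V) * u = (u : Module.End K V) * s := by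
    exact_mod_cast congrArg Units.val hcomm
  have hsn : (s : Module.End K V) * n = n * (s : Module.End K V) := by
    rw [hn_def, mul_sub, sub_mul, hsu, mul_one, one_mul]
  have hss : (s : Module.End K V).IsSemisimple :=
    Module.End.isSemisimple_of_squarefree_aeval_eq_zero hs (minpoly.aeval _ _)
  obtain ⟨Wp, hGX, hrepP⟩ := ConjUnip.poly_facts (K := K) m
  set y : Module.End K V := aeval n ((1 + X) ^ m - 1 : K[X]) with hy
  have hun : (1 : Module.End K V) + n = (u : Module.End K V) := by
    rw [hn_def]
    abel
  have hyu : y = (u : Module.End K V) ^ m - 1 := by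
    rw [hy, map_sub, map_pow, map_add, map_one, aeval_X, hun]
  have hsy : (s : Module.End K V) * y = y * (s : Module.End K V) :=
    ConjUnip.commute_aeval hsn _
  set w : Module.End K V := aeval n Wp with hwdef
  have hw : y = n * w := by
    rw [hy, hGX, map_mul, aeval_X]
  have hnw : n * w = w * n := ConjUnip.commute_aeval (Commute.refl n) Wp
  have hm' : ((m : K)) ≠ 0 := Nat.cast_ne_zero.mpr hm.ne'
  have hrep : ∀ t : ℕ, ∃ c : Module.End K V,
      y ^ t = ((m : K)) ^ t • n ^ t + n ^ (t + 1) * c := by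
    intro t
    obtain ⟨Q, hQ⟩ := hrepP t
    refine ⟨aeval n Q, ?_⟩
    have h1 := congrArg (aeval n) hQ
    simp only [map_pow, map_add, map_mul, aeval_X, aeval_C] at h1
    rw [← hy] at h1
    rwa [← map_pow (algebraMap K (Module.End K V)) ((m : K)) t, ← Algebra.smul_def] at h1
  obtain ⟨h, hcs, hcn⟩ := ConjUnip.aux (s : Module.End K V) n y N hN hss hsn hsy
    w hw hnw (m : K) hm' hrep
  set Hu : (Module.End K V)ˣ :=
    ⟨h.toLinearMap, h.symm.toLinearMap,
      by ext v; exact h.apply_symm_apply v,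
      by ext v; exact h.symm_apply_apply v⟩ with hHu
  have hHuS : Hu * s = s * Hu := by
    refine Units.ext ?_
    rw [Units.val_mul, Units.val_mul]
    exact LinearMap.ext fun v => hcs v
  have hHuU : Hu * u = u ^ m * Hu := by
    refine Units.ext ?_
    rw [Units.val_mul, Units.val_mul, Units.val_pow_eq_pow_val]
    refine LinearMap.ext fun v => ?_
    have h2 : (u : Module.End K V) v = v + n v := by
      rw [← hun]
      simp
    have h3 : ((u : Module.End K V) ^ m) (h v) = h v + y (h v) := by
      have : (u : Module.End K V) ^ m = 1 + y := by
        rw [hyu]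
        abel
      rw [this]
      simp
    calc ((Hu : Module.End K V) * (u : Module.End K V)) v
        = h ((u : Module.End K V) v) := rfl
      _ = h (v + n v) := by rw [h2]
      _ = h v + h (n v) := by simp
      _ = h v + y (h v) := by rw [hcn v]
      _ = ((u : Module.End K V) ^ m) (h v) := h3.symm
      _ = ((u : Module.End K V) ^ m * (Hu : Module.End K V)) v := rfl
  refine ⟨Hu⁻¹, ?_, ?_⟩
  · have hc : Commute Hu s := hHuS
    exact hc.inv_left.eq
  · rw [inv_inv]
    rw [hHuU]
    rw [mul_assoc, mul_inv_cancel, mul_one]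
end

section
/- Let K be a finite extension of ℚ_p, with v : K^× → ℚ the unique extension of the p-adic valuation (normalized so that v(p) = 1). Let I ⊂ ℤ be a finite set, let V = ⊕_{i ∈ I} V_i be a finite-dimensional K-vector space graded by I, and let n be a positive integer. Let α ∈ GL(V) be an automorphism that preserves each summand V_i, is diagonalizable over K, and such that every eigenvalue of α on V_i has valuation exactly n·i. For t ∈ K^×, let μ_t ∈ GL(V) be the automorphism acting on V_i as multiplication by tⁱ. Then for every t ∈ K^×, μ_t lies in the Zariski closure in GL(V) of the cyclic subgroup generated by α: with respect to any fixed basis of V, every polynomial in the matrix entries of g and of g⁻¹ that vanishes at αᵏ for all integers k also vanishes at μ_t. -/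
open scoped Padic

set_option maxHeartbeats 1000000
set_option synthInstance.maxHeartbeats 1000000

section Aux
open DirectSum

variable {K V : Type*} [Field K] [AddCommGroup V] [Module K V]

private lemma aux_invEig (g : V ≃ₗ[K] V) (x : V) (u : Kˣ) (h : g x = (u : K) • x) :
    g⁻¹ x = ((u⁻¹ : Kˣ) : K) • x := by
  have h3 : (u : K) • g⁻¹ x = x := by rw [← map_smul, ← h]; exact g.symm_apply_apply x
  calc g⁻¹ x = ((u⁻¹ : Kˣ) : K) • ((u : K) • g⁻¹ x) := by rw [smul_smul]; norm_num
    _ = ((u⁻¹ : Kˣ) : K) • x := by rw [h3]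

private lemma aux_eig_mem (Vsub : ℤ → Submodule K V) (hinternal : DirectSum.IsInternal Vsub)
    (α : V ≃ₗ[K] V) (hpres : ∀ (i : ℤ), ∀ x ∈ Vsub i, α x ∈ Vsub i)
    (n : ℕ) (hn : 0 < n) (v : K → ℚ)
    (heig : ∀ (i : ℤ) (c : K) (x : V), x ∈ Vsub i → x ≠ 0 → α x = c • x →
      v c = (n : ℚ) * (i : ℚ))
    (x : V) (hx : x ≠ 0) (c : K) (hxc : α x = c • x) :
    ∃ i : ℤ, x ∈ Vsub i := by
  classical
  set fA : ∀ i : ℤ, Vsub i → Vsub i := fun i w => ⟨α w, hpres i w w.2⟩ with hfA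
  have hfA0 : ∀ i, fA i 0 = 0 := by intro i; apply Subtype.ext; simp [hfA]
  have hfAadd : ∀ i x y, fA i (x + y) = fA i x + fA i y := by
    intro i x y; apply Subtype.ext; simp [hfA]
  set fB : ∀ i : ℤ, Vsub i → Vsub i := fun i w => c • w with hfB
  have hfB0 : ∀ i, fB i 0 = 0 := by intro i; simp [hfB]
  have hcomm : ∀ (f : ∀ i : ℤ, Vsub i → Vsub i) (hf : ∀ i, f i 0 = 0)
      (hfadd : ∀ i x y, f i (x + y) = f i x + f i y)
      (F : V →ₗ[K] V) (hF : ∀ i (w : Vsub i), ((f i w : V)) = F w),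
      ∀ z : ⨁ i, Vsub i,
        DirectSum.coeAddMonoidHom Vsub (DFinsupp.mapRange f hf z)
          = F (DirectSum.coeAddMonoidHom Vsub z) := by
    intro f hf hfadd F hF z
    induction z using DirectSum.induction_on with
    | zero => simp
    | of i w =>
        have h1 : (DirectSum.of (fun i => Vsub i) i w) = DFinsupp.single i w := rfl
        rw [h1, DFinsupp.mapRange_single]
        have h2 : (DFinsupp.single i (f i w) : ⨁ i, Vsub i)
            = DirectSum.of (fun i => Vsub i) i (f i w) := rfl
        rw [h2, DirectSum.coeAddMonoidHom_of, ← h1, DirectSum.coeAddMonoidHom_of, hF]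
    | add a b ha hb =>
        rw [DFinsupp.mapRange_add f hf hfadd, map_add, map_add, ha, hb, map_add]
  obtain ⟨y, hy⟩ := hinternal.2 x
  have hAB : DFinsupp.mapRange fA hfA0 y = DFinsupp.mapRange fB hfB0 y := by
    apply hinternal.1
    rw [hcomm fA hfA0 hfAadd α.toLinearMap (fun i w => rfl) y,
        hcomm fB hfB0 (fun i a b => smul_add c a b) (c • (LinearMap.id : V →ₗ[K] V))
          (fun i w => rfl) y, hy]
    simpa using hxc
  have hcomp : ∀ i, α ((y i : V)) = c • ((y i : V)) := by
    intro i
    have := congrArg (fun z => ((z i : V))) hAB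
    simpa [DFinsupp.mapRange_apply, hfA, hfB] using this
  have hy0 : y ≠ 0 := by rintro rfl; rw [map_zero] at hy; exact hx hy.symm
  obtain ⟨i₀, hi₀⟩ : ∃ i, y i ≠ 0 := by
    by_contra h
    push_neg at h
    exact hy0 (DFinsupp.ext h)
  have hval : ∀ i, y i ≠ 0 → v c = (n : ℚ) * i := by
    intro i hi
    refine heig i c (y i) (y i).2 ?_ (hcomp i)
    exact fun h0 => hi (Subtype.ext h0)
  have huniq : ∀ i, i ≠ i₀ → y i = 0 := by
    intro i hi
    by_contra h
    have h1 := hval i h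
    have h2 := hval i₀ hi₀
    rw [h1] at h2
    have hn' : (n : ℚ) ≠ 0 := by positivity
    have : (i : ℚ) = (i₀ : ℚ) := by
      field_simp at h2
      exact_mod_cast h2
    exact hi (by exact_mod_cast this)
  refine ⟨i₀, ?_⟩
  have hsingle : y = DFinsupp.single i₀ (y i₀) := by
    apply DFinsupp.ext
    intro i
    by_cases h : i = i₀
    · subst h; simp
    · rw [huniq i h, DFinsupp.single_eq_of_ne h]
  have hxy : x = ((y i₀ : V)) := by
    rw [← hy]
    nth_rewrite 1 [hsingle]
    exact DirectSum.coeAddMonoidHom_of Vsub i₀ (y i₀)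
  rw [hxy]
  exact (y i₀).2

private lemma aux_entry {ι ι₀ : Type} [Fintype ι] [DecidableEq ι] [Fintype ι₀]
    (b : Module.Basis ι K V) (b₀ : Module.Basis ι₀ K V)
    (g : V ≃ₗ[K] V) (dg : ι₀ → K) (hg : ∀ j, g (b₀ j) = dg j • b₀ j) (r s : ι) :
    LinearMap.toMatrix b b g.toLinearMap r s
      = ∑ j : ι₀, (b₀.repr (b s) j * b.repr (b₀ j) r) * dg j := by
  classical
  rw [LinearMap.toMatrix_apply]
  conv_lhs => rw [← b₀.sum_repr (b s)]
  rw [LinearEquiv.coe_coe, map_sum]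
  simp only [map_smul, hg, smul_smul, map_sum, Finsupp.coe_finset_sum, Finset.sum_apply,
    Finsupp.smul_apply, smul_eq_mul]
  apply Finset.sum_congr rfl
  intro j _
  ring

private lemma aux_zpow_sum {G : Type*} [CommGroup G] {ι : Type*} (a : G) (s : Finset ι)
    (f : ι → ℤ) : a ^ (∑ i ∈ s, f i) = ∏ i ∈ s, a ^ f i := by
  classical
  induction s using Finset.cons_induction with
  | empty => simp
  | cons i s hi ih => rw [Finset.sum_cons, Finset.prod_cons, zpow_add, ih]

private lemma aux_prod_zpow {G : Type*} [CommGroup G] {ι : Type*} (s : Finset ι)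
    (f : ι → G) (k : ℤ) : (∏ i ∈ s, f i) ^ k = ∏ i ∈ s, (f i) ^ k := by
  classical
  induction s using Finset.cons_induction with
  | empty => simp
  | cons i s hi ih => rw [Finset.prod_cons, Finset.prod_cons, mul_zpow, ih]

private lemma aux_monomial_prod {ι₀ : Type} [Fintype ι₀] [DecidableEq ι₀]
    (u : ι₀ → Kˣ) (m : (ι₀ ⊕ ι₀) →₀ ℕ) :
    ∏ i ∈ m.support,
        (Sum.elim (fun j => ((u j : Kˣ) : K)) (fun j => (((u j)⁻¹ : Kˣ) : K)) i) ^ m i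
      = ((∏ j : ι₀, u j ^ ((m (Sum.inl j) : ℤ) - (m (Sum.inr j) : ℤ)) : Kˣ) : K) := by
  classical
  rw [Finset.prod_subset (Finset.subset_univ m.support)
    (by intro i _ hi; simp [Finsupp.notMem_support_iff.mp hi])]
  rw [Fintype.prod_sum_type]
  simp only [Sum.elim_inl, Sum.elim_inr]
  rw [← Finset.prod_mul_distrib]
  have hpush : ((∏ j : ι₀, u j ^ ((m (Sum.inl j) : ℤ) - (m (Sum.inr j) : ℤ)) : Kˣ) : K)
      = ∏ j : ι₀, ((u j ^ ((m (Sum.inl j) : ℤ) - (m (Sum.inr j) : ℤ)) : Kˣ) : K) := by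
    push_cast; rfl
  rw [hpush]
  apply Finset.prod_congr rfl
  intro j _
  rw [Units.val_zpow_eq_zpow_val, zpow_sub₀ (Units.ne_zero (u j)), zpow_natCast, zpow_natCast,
    div_eq_mul_inv]
  simp [Units.val_inv_eq_inv_val, inv_pow]

end Aux

/-- Let `K` be a finite extension of `ℚ_p` with `v : K → ℚ` the (unique) extension of the
`p`-adic valuation, normalized by `v p = 1` (encoded by: `v` is additive on products of
nonzero elements and restricts to the standard valuation on `ℚ_p`). Let `V = ⊕_{i ∈ I} V_i`
be a finite-dimensional graded `K`-vector space (`I ⊆ ℤ` finite), `n > 0`, and `α ∈ GL(V)` an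
automorphism preserving each `V_i`, diagonalizable over `K`, all of whose eigenvalues on `V_i`
have valuation exactly `n·i`. For `t ∈ Kˣ` let `μ_t ∈ GL(V)` act on `V_i` by `t^i`. Then each
`μ_t` lies in the Zariski closure of the cyclic group generated by `α`: in any fixed basis of
`V`, every polynomial in the matrix entries of `g` and `g⁻¹` vanishing at `α^k` for all
integers `k` also vanishes at `μ_t`. -/
theorem grading_cocharacter_in_zariski_closure_of_frobenius
    (p : ℕ) [Fact p.Prime]
    (K : Type*) [Field K] [Algebra ℚ_[p] K] [FiniteDimensional ℚ_[p] K]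
    (v : K → ℚ)
    (hv_mul : ∀ x y : K, x ≠ 0 → y ≠ 0 → v (x * y) = v x + v y)
    (hv_ext : ∀ x : ℚ_[p], x ≠ 0 → v (algebraMap ℚ_[p] K x) = x.valuation)
    (V : Type*) [AddCommGroup V] [Module K V] [FiniteDimensional K V]
    (I : Finset ℤ) (Vsub : ℤ → Submodule K V)
    (hinternal : DirectSum.IsInternal Vsub)
    (hsupp : ∀ i : ℤ, i ∉ I → Vsub i = ⊥)
    (n : ℕ) (hn : 0 < n)
    (α : V ≃ₗ[K] V)
    (hpres : ∀ (i : ℤ), ∀ x ∈ Vsub i, α x ∈ Vsub i)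
    (hdiag : ∃ (ι : Type) (_ : Fintype ι) (b : Module.Basis ι K V),
      ∀ j : ι, ∃ c : K, α (b j) = c • b j)
    (heig : ∀ (i : ℤ) (c : K) (x : V), x ∈ Vsub i → x ≠ 0 → α x = c • x →
      v c = (n : ℚ) * (i : ℚ)) :
    ∀ (t : Kˣ) (μ : V ≃ₗ[K] V),
      (∀ (i : ℤ), ∀ x ∈ Vsub i, μ x = ((t ^ i : Kˣ) : K) • x) →
      ∀ (ι : Type) (_ : Fintype ι) (_ : DecidableEq ι) (b : Module.Basis ι K V)
        (P : MvPolynomial ((ι × ι) ⊕ (ι × ι)) K),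
        (∀ k : ℤ, MvPolynomial.eval
          (Sum.elim
            (fun ij : ι × ι => LinearMap.toMatrix b b (α ^ k).toLinearMap ij.1 ij.2)
            (fun ij : ι × ι => LinearMap.toMatrix b b ((α ^ k)⁻¹).toLinearMap ij.1 ij.2)) P = 0) →
        MvPolynomial.eval
          (Sum.elim
            (fun ij : ι × ι => LinearMap.toMatrix b b μ.toLinearMap ij.1 ij.2)
            (fun ij : ι × ι => LinearMap.toMatrix b b μ⁻¹.toLinearMap ij.1 ij.2)) P = 0 := by
  classical
  intro t μ hμ ι _ _ b P hP
  obtain ⟨ι₀, hfin, b₀, hb₀⟩ := hdiag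
  choose c hc using hb₀
  have hb0ne : ∀ j, b₀ j ≠ 0 := fun j => b₀.ne_zero j
  have hc0 : ∀ j, c j ≠ 0 := by
    intro j h
    apply hb0ne j
    have h2 := hc j
    rw [h, zero_smul] at h2
    exact (LinearEquiv.map_eq_zero_iff α).mp h2
  set cU : ι₀ → Kˣ := fun j => Units.mk0 (c j) (hc0 j) with hcU
  -- each eigenvector is homogeneous
  have hmem : ∀ j, ∃ i, b₀ j ∈ Vsub i := fun j =>
    aux_eig_mem Vsub hinternal α hpres n hn v heig (b₀ j) (hb0ne j) (c j) (hc j)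
  choose idx hidx using hmem
  have hval : ∀ j, v (c j) = (n : ℚ) * (idx j : ℚ) := fun j =>
    heig (idx j) (c j) (b₀ j) (hidx j) (hb0ne j) (hc j)
  -- basic valuation lemmas
  have hv1 : v (1 : K) = 0 := by
    have := hv_ext 1 one_ne_zero
    simpa using this
  have hvinv : ∀ u : Kˣ, v ((u⁻¹ : Kˣ) : K) = - v (u : K) := by
    intro u
    have := hv_mul (u : K) ((u⁻¹ : Kˣ) : K) (Units.ne_zero u) (Units.ne_zero u⁻¹)
    rw [show ((u : K) * ((u⁻¹ : Kˣ) : K)) = 1 by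
      rw [← Units.val_mul, mul_inv_cancel, Units.val_one], hv1] at this
    linarith
  have hvz : ∀ (u : Kˣ) (k : ℤ), v ((u ^ k : Kˣ) : K) = k * v (u : K) := by
    intro u k
    induction k using Int.induction_on with
    | zero => simpa using hv1
    | succ k ih =>
        have : (u ^ ((k : ℤ) + 1) : Kˣ) = u ^ (k : ℤ) * u := by rw [zpow_add_one]
        rw [this, Units.val_mul, hv_mul _ _ (Units.ne_zero _) (Units.ne_zero _), ih]
        push_cast; ring
    | pred k ih =>
        have : (u ^ (-(k : ℤ) - 1) : Kˣ) = u ^ (-(k : ℤ)) * u⁻¹ := by rw [zpow_sub_one]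
        rw [this, Units.val_mul, hv_mul _ _ (Units.ne_zero _) (Units.ne_zero _), ih, hvinv]
        push_cast; ring
  have hvprod : ∀ (f : ι₀ → Kˣ), v ((∏ j : ι₀, f j : Kˣ) : K) = ∑ j : ι₀, v ((f j : K)) := by
    intro f
    classical
    induction (Finset.univ : Finset ι₀) using Finset.cons_induction with
    | empty => simpa using hv1
    | cons i s hi ih =>
        rw [Finset.prod_cons, Finset.sum_cons, Units.val_mul,
          hv_mul _ _ (Units.ne_zero _) (Units.ne_zero _), ih]
  -- eigenvalue action of integer powers of α
  have hαnat : ∀ (a : ℕ) (j : ι₀), (α ^ a) (b₀ j) = ((cU j ^ a : Kˣ) : K) • b₀ j := by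
    intro a j
    induction a with
    | zero => simp
    | succ a ih =>
        have hmul : (α ^ (a + 1)) (b₀ j) = (α ^ a) (α (b₀ j)) := by
          rw [pow_succ]; rfl
        rw [hmul, hc j, map_smul, ih, smul_smul, pow_succ, Units.val_mul]
        congr 1
        have : ((cU j : Kˣ) : K) = c j := rfl
        rw [this]; ring
  have hαz : ∀ (k : ℤ) (j : ι₀), (α ^ k) (b₀ j) = ((cU j ^ k : Kˣ) : K) • b₀ j := by
    intro k j
    cases k with
    | ofNat a => rw [Int.ofNat_eq_coe, zpow_natCast, zpow_natCast]; exact hαnat a j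
    | negSucc a =>
        rw [zpow_negSucc, zpow_negSucc]
        exact aux_invEig (α ^ (a + 1)) (b₀ j) (cU j ^ (a + 1)) (hαnat (a + 1) j)
  have hαzinv : ∀ (k : ℤ) (j : ι₀),
      ((α ^ k)⁻¹) (b₀ j) = (((cU j ^ k)⁻¹ : Kˣ) : K) • b₀ j := fun k j =>
    aux_invEig (α ^ k) (b₀ j) (cU j ^ k) (hαz k j)
  -- eigenvalue action of μ
  have hμeig : ∀ j : ι₀, μ (b₀ j) = ((t ^ idx j : Kˣ) : K) • b₀ j := fun j =>
    hμ (idx j) (b₀ j) (hidx j)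
  have hμinv : ∀ j : ι₀, μ⁻¹ (b₀ j) = (((t ^ idx j)⁻¹ : Kˣ) : K) • b₀ j := fun j =>
    aux_invEig μ (b₀ j) (t ^ idx j) (hμeig j)
  -- substitute matrix entries by eigenvalue variables
  set L : ι → ι → ι₀ → K := fun r s j => b₀.repr (b s) j * b.repr (b₀ j) r with hL
  set σsub : ((ι × ι) ⊕ (ι × ι)) → MvPolynomial (ι₀ ⊕ ι₀) K :=
    Sum.elim
      (fun rs => ∑ j : ι₀, MvPolynomial.C (L rs.1 rs.2 j) * MvPolynomial.X (Sum.inl j))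
      (fun rs => ∑ j : ι₀, MvPolynomial.C (L rs.1 rs.2 j) * MvPolynomial.X (Sum.inr j))
    with hσsub
  set Q : MvPolynomial (ι₀ ⊕ ι₀) K := MvPolynomial.bind₁ σsub P with hQ
  have evalQ : ∀ w : (ι₀ ⊕ ι₀) → K,
      MvPolynomial.eval w Q = MvPolynomial.eval (fun sv => MvPolynomial.eval w (σsub sv)) P :=
    fun w => MvPolynomial.eval₂Hom_bind₁ (RingHom.id K) w σsub P
  -- bridging: for diagonal (w.r.t. b₀) automorphisms, eval of Q = eval of P at matrix entries
  have bridge : ∀ (g : V ≃ₗ[K] V) (dg dg' : ι₀ → K),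
      (∀ j, g (b₀ j) = dg j • b₀ j) → (∀ j, g⁻¹ (b₀ j) = dg' j • b₀ j) →
      MvPolynomial.eval
        (Sum.elim
          (fun ij : ι × ι => LinearMap.toMatrix b b g.toLinearMap ij.1 ij.2)
          (fun ij : ι × ι => LinearMap.toMatrix b b g⁻¹.toLinearMap ij.1 ij.2)) P
      = MvPolynomial.eval (Sum.elim dg dg') Q := by
    intro g dg dg' hg hg'
    rw [evalQ]
    have hfun : (Sum.elim
          (fun ij : ι × ι => LinearMap.toMatrix b b g.toLinearMap ij.1 ij.2)
          (fun ij : ι × ι => LinearMap.toMatrix b b g⁻¹.toLinearMap ij.1 ij.2))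
        = (fun sv => MvPolynomial.eval (Sum.elim dg dg') (σsub sv)) := by
      funext sv
      cases sv with
      | inl rs =>
          simp only [hσsub, Sum.elim_inl, map_sum, MvPolynomial.eval_mul, MvPolynomial.eval_C,
            MvPolynomial.eval_X]
          rw [aux_entry b b₀ g dg hg rs.1 rs.2]
      | inr rs =>
          simp only [hσsub, Sum.elim_inr, map_sum, MvPolynomial.eval_mul, MvPolynomial.eval_C,
            MvPolynomial.eval_X]
          rw [aux_entry b b₀ g⁻¹ dg' hg' rs.1 rs.2]
    rw [hfun]
  -- hypothesis in terms of Q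
  have hQα : ∀ k : ℤ, MvPolynomial.eval
      (Sum.elim (fun j => ((cU j ^ k : Kˣ) : K)) (fun j => (((cU j ^ k)⁻¹ : Kˣ) : K))) Q = 0 := by
    intro k
    rw [← bridge (α ^ k) _ _ (hαz k) (hαzinv k)]
    exact hP k
  -- goal in terms of Q
  rw [bridge μ _ _ hμeig hμinv]
  -- weights and grouping
  set wgt : ((ι₀ ⊕ ι₀) →₀ ℕ) → ι₀ → ℤ :=
    fun m j => (m (Sum.inl j) : ℤ) - (m (Sum.inr j) : ℤ) with hwgt
  set lamU : ((ι₀ ⊕ ι₀) →₀ ℕ) → Kˣ := fun m => ∏ j : ι₀, cU j ^ wgt m j with hlamU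
  set expE : ((ι₀ ⊕ ι₀) →₀ ℕ) → ℤ := fun m => ∑ j : ι₀, idx j * wgt m j with hexpE
  set ν : ((ι₀ ⊕ ι₀) →₀ ℕ) → Kˣ × ℤ := fun m => (lamU m, expE m) with hν
  set Pi : Finset (Kˣ × ℤ) := Q.support.image ν with hPi
  set A : Kˣ × ℤ → K := fun q =>
    ∑ m ∈ Q.support.filter (fun m => ν m = q), MvPolynomial.coeff m Q with hA
  -- generic evaluation of Q at a "unit diagonal" point
  have hevalU : ∀ (u : ι₀ → Kˣ),
      MvPolynomial.eval
        (Sum.elim (fun j => ((u j : Kˣ) : K)) (fun j => (((u j)⁻¹ : Kˣ) : K))) Q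
      = ∑ m ∈ Q.support, MvPolynomial.coeff m Q * ((∏ j : ι₀, u j ^ wgt m j : Kˣ) : K) := by
    intro u
    rw [MvPolynomial.eval_eq]
    apply Finset.sum_congr rfl
    intro m _
    rw [aux_monomial_prod u m]
  -- regrouping by fibers of ν
  have hregroup : ∀ (F : Kˣ × ℤ → K),
      ∑ m ∈ Q.support, MvPolynomial.coeff m Q * F (ν m) = ∑ q ∈ Pi, A q * F q := by
    intro F
    rw [← Finset.sum_fiberwise_of_maps_to (g := ν)
      (fun m hm => Finset.mem_image_of_mem ν hm) (fun m => MvPolynomial.coeff m Q * F (ν m))]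
    apply Finset.sum_congr rfl
    intro q _
    rw [hA, Finset.sum_mul]
    apply Finset.sum_congr rfl
    intro m hm
    rw [(Finset.mem_filter.mp hm).2]
  -- the hypothesis, regrouped
  have h1 : ∀ k : ℤ, ∑ q ∈ Pi, A q * ((q.1 ^ k : Kˣ) : K) = 0 := by
    intro k
    have := hQα k
    rw [hevalU (fun j => cU j ^ k)] at this
    rw [← this]
    rw [← hregroup (fun q => ((q.1 ^ k : Kˣ) : K))]
    apply Finset.sum_congr rfl
    intro m _
    congr 2
    show (∏ j : ι₀, cU j ^ wgt m j) ^ k = ∏ j : ι₀, (cU j ^ k) ^ wgt m j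
    rw [aux_prod_zpow]
    apply Finset.prod_congr rfl
    intro j _
    rw [← zpow_mul, ← zpow_mul, mul_comm]
  -- the valuation pins down the exponent
  have hvallam : ∀ m, v ((lamU m : Kˣ) : K) = (n : ℚ) * (expE m : ℚ) := by
    intro m
    rw [hlamU]
    show v ((∏ j : ι₀, cU j ^ wgt m j : Kˣ) : K) = _
    rw [hvprod (fun j => cU j ^ wgt m j)]
    have : ∀ j : ι₀, v ((cU j ^ wgt m j : Kˣ) : K) = (wgt m j : ℚ) * ((n : ℚ) * (idx j : ℚ)) := by
      intro j
      rw [hvz (cU j) (wgt m j)]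
      congr 1
      exact hval j
    rw [Finset.sum_congr rfl (fun j _ => this j), hexpE]
    push_cast
    rw [Finset.mul_sum]
    apply Finset.sum_congr rfl
    intro j _
    ring
  have hPival : ∀ q ∈ Pi, v ((q.1 : Kˣ) : K) = (n : ℚ) * (q.2 : ℚ) := by
    intro q hq
    obtain ⟨m, _, rfl⟩ := Finset.mem_image.mp hq
    exact hvallam m
  -- Dedekind's linear independence of characters kills each fiber coefficient
  have hA0 : ∀ q ∈ Pi, A q = 0 := by
    set ψ : ↥Pi → (Multiplicative ℤ →* K) :=
      fun q => (Units.coeHom K).comp (zpowersHom Kˣ q.1.1) with hψ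
    have hψinj : Function.Injective ψ := by
      intro q q' h
      have h1' : ((q.1.1 ^ (1 : ℤ) : Kˣ) : K) = ((q'.1.1 ^ (1 : ℤ) : Kˣ) : K) := by
        have := congrArg (fun f => f (Multiplicative.ofAdd (1 : ℤ))) h
        simpa [hψ] using this
      have hu : q.1.1 = q'.1.1 := by
        apply Units.ext
        simpa using h1'
      have he : q.1.2 = q'.1.2 := by
        have hv1' := hPival q.1 q.2
        have hv2' := hPival q'.1 q'.2
        rw [hu] at hv1'
        rw [hv1'] at hv2'
        have hn' : (n : ℚ) ≠ 0 := by positivity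
        have : (q.1.2 : ℚ) = (q'.1.2 : ℚ) := by
          field_simp at hv2'
          exact_mod_cast hv2'
        exact_mod_cast this
      exact Subtype.ext (Prod.ext hu he)
    have hli : LinearIndependent K ((fun f : Multiplicative ℤ →* K => (f : Multiplicative ℤ → K)) ∘ ψ) :=
      (linearIndependent_monoidHom (Multiplicative ℤ) K).comp ψ hψinj
    intro q hq
    have hzero : ∑ q ∈ (Finset.univ : Finset ↥Pi),
        (fun q : ↥Pi => A q.1) q • ((fun f : Multiplicative ℤ →* K =>
          (f : Multiplicative ℤ → K)) ∘ ψ) q = 0 := by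
      funext x
      rw [Finset.sum_apply]
      have hterm : ∀ q : ↥Pi,
          ((fun q : ↥Pi => A q.1) q • ((fun f : Multiplicative ℤ →* K =>
            (f : Multiplicative ℤ → K)) ∘ ψ) q) x
          = A q.1 * (((q.1.1 ^ (Multiplicative.toAdd x) : Kˣ)) : K) := by
        intro q
        simp [hψ]
      rw [Finset.sum_congr rfl (fun q _ => hterm q)]
      have h1x := h1 (Multiplicative.toAdd x)
      rw [← Finset.sum_attach Pi
        (fun q => A q * (((q.1 ^ (Multiplicative.toAdd x) : Kˣ)) : K))] at h1x
      simpa using h1x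
    exact linearIndependent_iff'.mp hli Finset.univ (fun q => A q.1) hzero ⟨q, hq⟩
      (Finset.mem_univ _)
  -- conclude
  rw [hevalU (fun j => t ^ idx j)]
  have : ∀ m, ((∏ j : ι₀, (t ^ idx j) ^ wgt m j : Kˣ) : K) = ((t ^ expE m : Kˣ) : K) := by
    intro m
    congr 1
    rw [hexpE, aux_zpow_sum]
    apply Finset.prod_congr rfl
    intro j _
    rw [← zpow_mul]
  have hre : ∑ m ∈ Q.support, MvPolynomial.coeff m Q
        * ((∏ j : ι₀, (t ^ idx j) ^ wgt m j : Kˣ) : K)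
      = ∑ q ∈ Pi, A q * ((t ^ q.2 : Kˣ) : K) := by
    rw [← hregroup (fun q => ((t ^ q.2 : Kˣ) : K))]
    apply Finset.sum_congr rfl
    intro m _
    rw [this m]
  rw [hre]
  apply Finset.sum_eq_zero
  intro q hq
  rw [hA0 q hq, zero_mul]
end
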